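/- A₀ is contained in A₁: every probability measure P̄ on Ω̄ under which X̄ is a Markov chain with initial distribution m₀* and kernels (π_t) and under which τ̄ is an F^{X̄,P̄}-stopping time, also makes X̄ an F̄-Markov chain with initial distribution m₀* and kernels (π_t). -/

import Mathlib

open MeasureTheory ProbabilityTheory
open scoped NNReal ENNReal Topology
open Fin.NatCast

namespace LPOS

variable (T : ℕ) (E : Type*) [MeasurableSpace E]

/-- canonical path space E^I, I = {0,…,T} -/
abbrev Path := Fin (T + 1) → E

/-- canonical space Ω̄ = E^I × I -/
abbrev OmegaBar := Path T E × Fin (T + 1)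

/-- the filtration F^X_t = σ(X_s : s ≤ t) on the path space -/
def FX (t : ℕ) : MeasurableSpace (Path T E) :=
  ⨆ s : Fin (T + 1), ⨆ _ : (s : ℕ) ≤ t, MeasurableSpace.comap (fun x => x s) inferInstance

/-- the filtration F^X̄_t = σ(X̄_s : s ≤ t) on Ω̄ -/
def FXbar (t : ℕ) : MeasurableSpace (OmegaBar T E) :=
  ⨆ s : Fin (T + 1), ⨆ _ : (s : ℕ) ≤ t, MeasurableSpace.comap (fun ω => ω.1 s) inferInstance

/-- the filtration F^τ̄_t = σ({τ̄ = 0},…,{τ̄ = t}) on Ω̄ -/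
def Ftau (t : ℕ) : MeasurableSpace (OmegaBar T E) :=
  MeasurableSpace.generateFrom {A | ∃ s : Fin (T + 1), (s : ℕ) ≤ t ∧ A = {ω | ω.2 = s}}

/-- F̄_t = F^X̄_t ∨ F^τ̄_t -/
def Fbar (t : ℕ) : MeasurableSpace (OmegaBar T E) := FXbar T E t ⊔ Ftau T E t

/-- F^{X̄,P̄}_t = F^X̄_t ∨ N_{P̄}(F̄_T) -/
def FXbarP (P : Measure (OmegaBar T E)) (t : ℕ) : MeasurableSpace (OmegaBar T E) :=
  FXbar T E t ⊔ MeasurableSpace.generateFrom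
    {A | ∃ C, MeasurableSet[Fbar T E T] C ∧ P C = 0 ∧ A ⊆ C}

/-- F^{X,ν}_t = F^X_t ∨ N_ν(F^X_T) on the path space -/
def FXnu (ν : Measure (Path T E)) (t : ℕ) : MeasurableSpace (Path T E) :=
  FX T E t ⊔ MeasurableSpace.generateFrom
    {A | ∃ C, MeasurableSet[FX T E T] C ∧ ν C = 0 ∧ A ⊆ C}

/-- "under P, X̄ is a G-Markov chain with transition kernels (π_t)" -/
def IsMarkovWith (P : Measure (OmegaBar T E)) (G : ℕ → MeasurableSpace (OmegaBar T E))
    (π : ℕ → Kernel E E) : Prop :=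
  ∀ t : ℕ, 1 ≤ t → t ≤ T → ∀ B : Set E, MeasurableSet B →
    (P[Set.indicator {ω | ω.1 (t : Fin (T + 1)) ∈ B} (fun _ => (1 : ℝ)) | G (t - 1)]
      =ᵐ[P] fun ω => (π t (ω.1 ((t - 1 : ℕ) : Fin (T + 1))) B).toReal)

/-- ν is the law of the Markov chain with kernels (π_t) and initial law m₀* -/
def IsMarkovLaw (ν : Measure (Path T E)) (π : ℕ → Kernel E E) (m0 : Measure E) : Prop :=
  ν.map (fun x => x 0) = m0 ∧
  ∀ t : ℕ, 1 ≤ t → t ≤ T → ∀ B : Set E, MeasurableSet B →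
    (ν[Set.indicator {x | x (t : Fin (T + 1)) ∈ B} (fun _ => (1 : ℝ)) | FX T E (t - 1)]
      =ᵐ[ν] fun x => (π t (x ((t - 1 : ℕ) : Fin (T + 1))) B).toReal)

/-- A₀ : under P, X̄ is a (plain) Markov chain with initial law m₀* and kernels (π_t),
and τ̄ is an F^{X̄,P̄}-stopping time -/
def A0 (π : ℕ → Kernel E E) (m0 : Measure E) : Set (Measure (OmegaBar T E)) :=
  {P | IsProbabilityMeasure P ∧ P.map (fun ω => ω.1 0) = m0 ∧
    IsMarkovWith T E P (FXbar T E) π ∧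
    ∀ t : ℕ, t ≤ T → MeasurableSet[FXbarP T E P t] {ω | (ω.2 : ℕ) ≤ t}}

/-- A₁ : under P, X̄ is an F̄-Markov chain with initial law m₀* and kernels (π_t) -/
def A1 (π : ℕ → Kernel E E) (m0 : Measure E) : Set (Measure (OmegaBar T E)) :=
  {P | IsProbabilityMeasure P ∧ P.map (fun ω => ω.1 0) = m0 ∧
    IsMarkovWith T E P (Fbar T E) π}

/-- occupation measure μ^P̄_t(B) = P̄(X̄_t ∈ B, τ̄ = t) -/
noncomputable def occMu (P : Measure (OmegaBar T E)) (t : Fin (T + 1)) : Measure E :=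
  (P.restrict {ω | ω.2 = t}).map (fun ω => ω.1 t)

/-- occupation measure m^P̄_t(B) = P̄(X̄_t ∈ B, t < τ̄), t ∈ I∖{T} -/
noncomputable def occM (P : Measure (OmegaBar T E)) (t : Fin T) : Measure E :=
  (P.restrict {ω | (t : ℕ) < (ω.2 : ℕ)}).map (fun ω => ω.1 t.castSucc)

/-- the pair of families of occupation measures induced by a probability measure on Ω̄ -/
instance occMu_finite (P : Measure (OmegaBar T E)) [IsFiniteMeasure P] (t : Fin (T + 1)) :
    IsFiniteMeasure (occMu T E P t) := by
  unfold occMu; infer_instance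

instance occM_finite (P : Measure (OmegaBar T E)) [IsFiniteMeasure P] (t : Fin T) :
    IsFiniteMeasure (occM T E P t) := by
  unfold occM; infer_instance

/-- the pair of families of occupation measures induced by a probability measure on Ω̄ -/
noncomputable def occ (P : ProbabilityMeasure (OmegaBar T E)) :
    (Fin (T + 1) → FiniteMeasure E) × (Fin T → FiniteMeasure E) :=
  (fun t => ⟨occMu T E (P : Measure (OmegaBar T E)) t, inferInstance⟩,
   fun t => ⟨occM T E (P : Measure (OmegaBar T E)) t, inferInstance⟩)

/-- the linear-programming constraint set R -/
def Rset [TopologicalSpace E] (π : ℕ → Kernel E E) (m0 : Measure E) :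
    Set ((Fin (T + 1) → FiniteMeasure E) × (Fin T → FiniteMeasure E)) :=
  {q | (∀ t, q.1 t Set.univ ≤ 1) ∧ (∀ t, q.2 t Set.univ ≤ 1) ∧
    ∀ φ : ℕ → E → ℝ, (∀ t, Continuous (φ t)) →
      ∑ t : Fin (T + 1), ∫ x, φ t x ∂(q.1 t : Measure E)
        = (∫ x, φ 0 x ∂m0) +
          ∑ t : Fin T, ∫ x, ((∫ y, φ ((t : ℕ) + 1) y ∂(π ((t : ℕ) + 1) x)) - φ t x)
            ∂(q.2 t : Measure E)}

noncomputable def Mphi (π : ℕ → Kernel E E) (φ : ℕ → E → ℝ) (t : ℕ)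
    (ω : OmegaBar T E) : ℝ :=
  φ t (ω.1 (t : Fin (T + 1))) -
    ∑ s ∈ Finset.range t,
      ((∫ y, φ (s + 1) y ∂(π (s + 1) (ω.1 (s : Fin (T + 1))))) - φ s (ω.1 (s : Fin (T + 1))))

def sigmaTimes (t : ℕ) : MeasurableSpace (Fin (T + 1)) :=
  MeasurableSpace.generateFrom {S | ∃ s : Fin (T + 1), (s : ℕ) ≤ t ∧ S = {s}}


/-- the σ-algebra of sets that agree with an `m₁`-measurable set up to a `P`-null set -/
def nullApprox {Ω : Type*} [MeasurableSpace Ω] (P : Measure Ω) (m₁ : MeasurableSpace Ω) :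
    MeasurableSpace Ω where
  MeasurableSet' A := ∃ A', MeasurableSet[m₁] A' ∧ P (symmDiff A A') = 0
  measurableSet_empty := ⟨∅, @MeasurableSet.empty _ m₁, by simp⟩
  measurableSet_compl := by
    rintro A ⟨A', hA', h0⟩
    exact ⟨A'ᶜ, hA'.compl, by rwa [compl_symmDiff_compl]⟩
  measurableSet_iUnion := by
    intro f hf
    choose A' hA' h0 using hf
    refine ⟨⋃ i, A' i, MeasurableSet.iUnion hA', measure_mono_null ?_ (measure_iUnion_null h0)⟩
    intro x hx
    rcases Set.mem_symmDiff.1 hx with ⟨h1, hn⟩ | ⟨h1, hn⟩ <;>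
      rcases Set.mem_iUnion.1 h1 with ⟨i, hi⟩
    · exact Set.mem_iUnion.2
        ⟨i, Set.mem_symmDiff.2 (Or.inl ⟨hi, fun h => hn (Set.mem_iUnion.2 ⟨i, h⟩)⟩)⟩
    · exact Set.mem_iUnion.2
        ⟨i, Set.mem_symmDiff.2 (Or.inr ⟨hi, fun h => hn (Set.mem_iUnion.2 ⟨i, h⟩)⟩)⟩

theorem le_nullApprox {Ω : Type*} [inst : MeasurableSpace Ω] (P : Measure Ω)
    (m₁ : MeasurableSpace Ω) : m₁ ≤ @nullApprox Ω inst P m₁ := by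
  intro A hA
  refine ⟨A, hA, ?_⟩
  rw [symmDiff_self]
  simp

theorem nullApprox_null {Ω : Type*} [inst : MeasurableSpace Ω] (P : Measure Ω)
    (m₁ : MeasurableSpace Ω) {A : Set Ω} (h : P A = 0) :
    MeasurableSet[@nullApprox Ω inst P m₁] A := by
  refine ⟨∅, @MeasurableSet.empty _ m₁, ?_⟩
  simpa using h

theorem fXbar_mono (T : ℕ) (E : Type*) [MeasurableSpace E] {s t : ℕ} (h : s ≤ t) :
    FXbar T E s ≤ FXbar T E t := by
  refine iSup₂_le fun u hu => ?_
  exact le_iSup₂ (f := fun (u : Fin (T + 1)) (_ : (u : ℕ) ≤ t) =>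
    MeasurableSpace.comap (fun ω : OmegaBar T E => ω.1 u) inferInstance) u (hu.trans h)

theorem fXbar_le (T : ℕ) (E : Type*) [MeasurableSpace E] (t : ℕ) :
    FXbar T E t ≤ (inferInstance : MeasurableSpace (OmegaBar T E)) :=
  iSup₂_le fun s _ => Measurable.comap_le ((measurable_pi_apply s).comp measurable_fst)

theorem fbar_le (T : ℕ) (E : Type*) [MeasurableSpace E] (t : ℕ) :
    Fbar T E t ≤ (inferInstance : MeasurableSpace (OmegaBar T E)) := by
  refine sup_le (fXbar_le T E t) (MeasurableSpace.generateFrom_le ?_)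
  rintro A ⟨s, hs, rfl⟩
  exact measurable_snd (measurableSet_singleton s)

section Thms

variable [MetricSpace E] [CompactSpace E] [Nonempty E] [BorelSpace E]
    [SecondCountableTopology E]

theorem stmt_9
    (hT : 1 ≤ T)
    (π : ℕ → Kernel E E) [∀ t, IsMarkovKernel (π t)]
    (m0 : Measure E) [IsProbabilityMeasure m0] :
    A0 T E π m0 ⊆ A1 T E π m0 := by
  intro P hP
  obtain ⟨hprob, hinit, hmark, hstop⟩ := hP
  haveI := hprob
  refine ⟨hprob, hinit, ?_⟩
  intro t ht1 htT B hB
  have huT : t - 1 ≤ T := (Nat.sub_le t 1).trans htT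
  have hm1 : FXbar T E (t - 1) ≤ (inferInstance : MeasurableSpace (OmegaBar T E)) :=
    fXbar_le T E (t - 1)
  have hmF : Fbar T E (t - 1) ≤ (inferInstance : MeasurableSpace (OmegaBar T E)) :=
    fbar_le T E (t - 1)
  set F : OmegaBar T E → ℝ :=
    Set.indicator {ω : OmegaBar T E | ω.1 (t : Fin (T + 1)) ∈ B} (fun _ => (1 : ℝ)) with hF
  set g : OmegaBar T E → ℝ :=
    (fun ω : OmegaBar T E => (π t (ω.1 ((t - 1 : ℕ) : Fin (T + 1))) B).toReal) with hg
  have hsetmeas : MeasurableSet {ω : OmegaBar T E | ω.1 (t : Fin (T + 1)) ∈ B} :=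
    ((measurable_pi_apply _).comp measurable_fst) hB
  have hFint : Integrable F P := (integrable_const (1 : ℝ)).indicator hsetmeas
  have hgmeas : Measurable g :=
    ((Kernel.measurable_coe (π t) hB).ennreal_toReal).comp
      ((measurable_pi_apply _).comp measurable_fst)
  have hgbound : ∀ ω, ‖g ω‖ ≤ 1 := by
    intro ω
    rw [Real.norm_eq_abs, abs_of_nonneg ENNReal.toReal_nonneg]
    calc (π t (ω.1 ((t - 1 : ℕ) : Fin (T + 1))) B).toReal
        ≤ (1 : ℝ≥0∞).toReal := ENNReal.toReal_mono ENNReal.one_ne_top prob_le_one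
      _ = 1 := ENNReal.toReal_one
  have hgint : Integrable g P :=
    (integrable_const (1 : ℝ)).mono' hgmeas.aestronglyMeasurable (ae_of_all _ hgbound)
  have hMk := hmark t ht1 htT B hB
  have hPle : ∀ n, n ≤ t - 1 →
      MeasurableSet[nullApprox P (FXbar T E (t - 1))] {ω : OmegaBar T E | (ω.2 : ℕ) ≤ n} := by
    intro n hn
    have h1 := hstop n (hn.trans huT)
    have h2 : FXbarP T E P n ≤ nullApprox P (FXbar T E (t - 1)) := by
      refine sup_le ((fXbar_mono T E hn).trans (le_nullApprox P _)) ?_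
      refine MeasurableSpace.generateFrom_le ?_
      rintro A ⟨C, _, hC0, hsubC⟩
      exact nullApprox_null P _ (measure_mono_null hsubC hC0)
    exact h2 _ h1
  have hsub : Fbar T E (t - 1) ≤ nullApprox P (FXbar T E (t - 1)) := by
    refine sup_le (le_nullApprox P _) (MeasurableSpace.generateFrom_le ?_)
    rintro A ⟨s, hs, rfl⟩
    cases hsn : (s : ℕ) with
    | zero =>
      have hA : {ω : OmegaBar T E | ω.2 = s} = {ω : OmegaBar T E | (ω.2 : ℕ) ≤ 0} := by
        ext ω; simp only [Set.mem_setOf_eq, Fin.ext_iff, hsn]; omega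
      rw [hA]; exact hPle 0 (Nat.zero_le _)
    | succ n =>
      have hA : {ω : OmegaBar T E | ω.2 = s} =
          {ω : OmegaBar T E | (ω.2 : ℕ) ≤ n + 1} \ {ω : OmegaBar T E | (ω.2 : ℕ) ≤ n} := by
        ext ω
        simp only [Set.mem_setOf_eq, Set.mem_diff, Fin.ext_iff, hsn]; omega
      rw [hA]
      exact MeasurableSet.diff (hPle (n + 1) (hsn ▸ hs)) (hPle n (by omega))
  have hvle : (((t - 1 : ℕ) : Fin (T + 1)) : ℕ) ≤ t - 1 := by
    rw [Fin.val_natCast]; exact Nat.mod_le _ _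
  have hcoord : Measurable[FXbar T E (t - 1)]
      (fun ω : OmegaBar T E => ω.1 ((t - 1 : ℕ) : Fin (T + 1))) :=
    Measurable.of_comap_le (le_iSup₂ (f := fun (u : Fin (T + 1)) (_ : (u : ℕ) ≤ t - 1) =>
      MeasurableSpace.comap (fun ω : OmegaBar T E => ω.1 u) inferInstance)
      ((t - 1 : ℕ) : Fin (T + 1)) hvle)
  have hgm' : Measurable[Fbar T E (t - 1)] g :=
    (((Kernel.measurable_coe (π t) hB).ennreal_toReal).comp hcoord).mono le_sup_left le_rfl
  have hgm : AEStronglyMeasurable[Fbar T E (t - 1)] g P :=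
    StronglyMeasurable.aestronglyMeasurable hgm'.stronglyMeasurable
  refine (ae_eq_condExp_of_forall_setIntegral_eq hmF hFint
    (fun s _ _ => hgint.integrableOn) (fun s hs _ => ?_) hgm).symm
  obtain ⟨A', hA', h0⟩ := hsub s hs
  have hae : s =ᵐ[P] A' := measure_symmDiff_eq_zero_iff.1 h0
  calc ∫ x in s, g x ∂P = ∫ x in A', g x ∂P := setIntegral_congr_set hae
    _ = ∫ x in A', (P[F|FXbar T E (t - 1)]) x ∂P :=
        integral_congr_ae (ae_restrict_of_ae hMk.symm)
    _ = ∫ x in A', F x ∂P := setIntegral_condExp hm1 hFint hA'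
    _ = ∫ x in s, F x ∂P := (setIntegral_congr_set hae).symm

end Thms
end LPOS
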